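/- Let β ≤ −1 and γ > −1. Define, for measurable f ≥ 0 and x > 0, N₂^β f(x) = χ_{(0,1)}(x) ∫_0^∞ [ (xy)^{−2β} sup_{1/4<s<1} (1−s)^{−2β} K_s^{−β}(x,y) ] f(y) dν_β(y) and N₃^γ f(x) = χ_{(0,1)}(x) ∫_0^∞ [ sup_{1/4<s<1} K_s^γ(x,y) ] f(y) dν_γ(y). Then N₂^β is of strong type (1,1) with respect to ν_β and N₃^γ is of strong type (1,1) with respect to ν_γ; i.e. there are constants C (depending only on β, resp. γ) such that ∫_0^∞ N₂^β f dν_β ≤ C ∫_0^∞ f dν_β and ∫_0^∞ N₃^γ f dν_γ ≤ C ∫_0^∞ f dν_γ for every nonnegative f in the respective L¹ space. -/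
import Mathlib


open MeasureTheory

/-- In dimension one, the measure `ν_β` on `(0,∞)` with density `x^{2β+1} e^{−x²}`. -/
noncomputable def nu1 (β : ℝ) : Measure ℝ :=
  ((volume : Measure ℝ).withDensity fun x =>
    ENNReal.ofReal (x ^ (2 * β + 1) * Real.exp (-x ^ 2))).restrict (Set.Ioi 0)

/-- The one-dimensional kernel
`K_s^γ(x,y) = s^{−1/2} (x + √s)^{−2γ−1} exp(x² − ((1+s)x − (1−s)y)²/(8s))`. -/
noncomputable def Kker1 (γ s x y : ℝ) : ℝ :=
  s ^ (-(1 : ℝ) / 2) * (x + Real.sqrt s) ^ (-(2 * γ + 1)) *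
    Real.exp (x ^ 2 - ((1 + s) * x - (1 - s) * y) ^ 2 / (8 * s))

/-- A real power of a base in `[1/2, 2]` is at most `2 ^ |e|`. -/
lemma stmt12_lemA {b : ℝ} (e : ℝ) (hb1 : 1/2 ≤ b) (hb2 : b ≤ 2) : b ^ e ≤ 2 ^ |e| := by
  have hb0 : (0:ℝ) < b := lt_of_lt_of_le (by norm_num) hb1
  rcases le_or_gt 0 e with he | he
  · calc b ^ e ≤ 2 ^ e := Real.rpow_le_rpow hb0.le hb2 he
      _ ≤ 2 ^ |e| := Real.rpow_le_rpow_of_exponent_le one_le_two (le_abs_self e)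
  · calc b ^ e ≤ (1/2:ℝ) ^ e := Real.rpow_le_rpow_of_nonpos (by norm_num) hb1 he.le
      _ = 2 ^ (-e) := by
        rw [one_div, Real.inv_rpow (by norm_num), ← Real.rpow_neg (by norm_num)]
      _ = 2 ^ |e| := by rw [abs_of_neg he]

/-- A uniform bound for `u^a exp(−(u−c)²/8)` with `0 ≤ u` and `c ∈ [0,2]`. -/
lemma stmt12_lemB (a : ℝ) (ha : 0 ≤ a) : ∃ M : ℝ, 0 < M ∧ ∀ u c : ℝ, 0 ≤ u → 0 ≤ c → c ≤ 2 →
    u ^ a * Real.exp (-(u - c)^2 / 8) ≤ M := by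
  set n := ⌈a⌉₊ with hn
  refine ⟨4 ^ a + (Nat.factorial n : ℝ) * 32 ^ n, by positivity, fun u c hu hc0 hc2 => ?_⟩
  rcases le_or_gt u 4 with h4 | h4
  · have h1 : u ^ a ≤ 4 ^ a := Real.rpow_le_rpow hu h4 ha
    have h2 : Real.exp (-(u - c)^2 / 8) ≤ 1 := by
      rw [Real.exp_le_one_iff]
      have : (0:ℝ) ≤ (u - c)^2 := sq_nonneg _
      linarith
    have h3 : (0:ℝ) ≤ u ^ a := Real.rpow_nonneg hu a
    nlinarith [Real.exp_pos (-(u - c)^2 / 8), Nat.factorial_pos n,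
      pow_pos (by norm_num : (0:ℝ) < 32) n,
      mul_pos (by exact_mod_cast Nat.factorial_pos n : (0:ℝ) < (Nat.factorial n : ℝ))
        (pow_pos (by norm_num : (0:ℝ) < 32) n)]
  · set t := (u - c)^2 / 8 with htdef
    rw [show -(u - c)^2/8 = -t by rw [htdef]; ring]
    have hu1 : (1:ℝ) ≤ u := by linarith
    have ht : u^2 / 32 ≤ t := by
      rw [htdef]
      nlinarith [sq_nonneg (u - c), mul_nonneg (sub_nonneg.2 hc2) (by linarith : (0:ℝ) ≤ u - 4),
        mul_nonneg hc0 (sub_nonneg.2 hc2)]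
    have ht0 : (0:ℝ) < t := lt_of_lt_of_le (by positivity) ht
    have h1 : u ^ a ≤ u ^ (n:ℕ) := by
      rw [← Real.rpow_natCast u n]
      exact Real.rpow_le_rpow_of_exponent_le hu1 (Nat.le_ceil a)
    have h2 : u ^ n ≤ 32 ^ n * t ^ n := by
      calc u ^ n ≤ (u^2) ^ n := by
            rw [← pow_mul]
            exact pow_le_pow_right₀ hu1 (by omega)
        _ ≤ (32 * t) ^ n := pow_le_pow_left₀ (sq_nonneg u) (by linarith) n
        _ = 32 ^ n * t ^ n := mul_pow _ _ _
    have h3 : t ^ n * Real.exp (-t) ≤ (Nat.factorial n : ℝ) := by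
      have := Real.pow_div_factorial_le_exp (x := t) ht0.le n
      rw [Real.exp_neg, ← div_eq_mul_inv, div_le_iff₀ (Real.exp_pos t)]
      rw [div_le_iff₀ (by positivity : (0:ℝ) < (Nat.factorial n : ℝ))] at this
      linarith
    have hexp : (0:ℝ) < Real.exp (-t) := Real.exp_pos _
    have h4a : (0:ℝ) ≤ (4:ℝ) ^ a := Real.rpow_nonneg (by norm_num) a
    calc u ^ a * Real.exp (-t)
        ≤ (32 ^ n * t ^ n) * Real.exp (-t) := by
          apply mul_le_mul_of_nonneg_right _ hexp.le
          exact le_trans h1 h2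
      _ = 32 ^ n * (t ^ n * Real.exp (-t)) := by ring
      _ ≤ 32 ^ n * (Nat.factorial n : ℝ) := by
          apply mul_le_mul_of_nonneg_left h3 (by positivity)
      _ ≤ 4 ^ a + (Nat.factorial n : ℝ) * 32 ^ n := by linarith

lemma stmt12_sqrt_facts {s : ℝ} (hs0 : 1/4 < s) (hs1 : s < 1) :
    1/2 ≤ Real.sqrt s ∧ Real.sqrt s ≤ 1 := by
  constructor
  · rw [show (1/2:ℝ) = Real.sqrt (1/4) by
      rw [show (1/4:ℝ) = (1/2)^2 by norm_num, Real.sqrt_sq (by norm_num)]]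
    exact Real.sqrt_le_sqrt hs0.le
  · rw [show (1:ℝ) = Real.sqrt 1 by simp]
    exact Real.sqrt_le_sqrt hs1.le

lemma stmt12_srpow_le {s : ℝ} (hs0 : 1/4 < s) (hs1 : s < 1) : s ^ (-(1:ℝ)/2) ≤ 2 := by
  have h0 : (0:ℝ) < s := by linarith
  have h : s ^ (-(1:ℝ)/2) = (Real.sqrt s)⁻¹ := by
    rw [show (-(1:ℝ)/2) = -(1/2 : ℝ) by norm_num, Real.rpow_neg h0.le,
      ← Real.sqrt_eq_rpow]
  rw [h]
  have h2 := (stmt12_sqrt_facts hs0 hs1).1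
  have h3 : (0:ℝ) < Real.sqrt s := by linarith
  rw [inv_le_comm₀ h3 (by norm_num)]
  linarith

/-- Uniform kernel bound (valid for every real `γ`). -/
lemma stmt12_lemK3 (γ : ℝ) : ∀ x ∈ Set.Ioo (0:ℝ) 1, ∀ y : ℝ, ∀ s ∈ Set.Ioo (1/4:ℝ) 1,
    Kker1 γ s x y ≤ 2 * 2 ^ |(-(2*γ+1))| * Real.exp 1 := by
  intro x hx y s hs
  obtain ⟨hx0, hx1⟩ := hx
  obtain ⟨hs0, hs1⟩ := hs
  obtain ⟨hq1, hq2⟩ := stmt12_sqrt_facts hs0 hs1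
  have hs0' : (0:ℝ) < s := by linarith
  unfold Kker1
  have h1 : s ^ (-(1:ℝ)/2) ≤ 2 := stmt12_srpow_le hs0 hs1
  have h2 : (x + Real.sqrt s) ^ (-(2*γ+1)) ≤ 2 ^ |(-(2*γ+1))| :=
    stmt12_lemA _ (by linarith) (by linarith)
  have h3 : Real.exp (x ^ 2 - ((1 + s) * x - (1 - s) * y) ^ 2 / (8 * s)) ≤ Real.exp 1 := by
    apply Real.exp_le_exp.2
    have hq : (0:ℝ) ≤ ((1 + s) * x - (1 - s) * y) ^ 2 / (8 * s) := by positivity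
    nlinarith
  have hb0 : (0:ℝ) < x + Real.sqrt s := by linarith
  have p1 : (0:ℝ) ≤ s ^ (-(1:ℝ)/2) := Real.rpow_nonneg hs0'.le _
  have p2 : (0:ℝ) ≤ (x + Real.sqrt s) ^ (-(2*γ+1)) := Real.rpow_nonneg hb0.le _
  have p4 : (0:ℝ) ≤ (2:ℝ) ^ |(-(2*γ+1))| := Real.rpow_nonneg (by norm_num) _
  gcongr

/-- Kernel bound for `N₂`. -/
lemma stmt12_lemK2 (β M : ℝ) (hβ : β ≤ -1)
    (hM : ∀ u c : ℝ, 0 ≤ u → 0 ≤ c → c ≤ 2 →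
      u ^ (-2*β) * Real.exp (-(u - c)^2 / 8) ≤ M) :
    ∀ x ∈ Set.Ioo (0:ℝ) 1,
    ∀ y ∈ Set.Ioi (0:ℝ), ∀ s ∈ Set.Ioo (1/4:ℝ) 1,
    (x*y) ^ (-2*β) * ((1-s) ^ (-2*β) * Kker1 (-β) s x y) ≤
      (2 * 2 ^ |(-(2*(-β)+1))| * Real.exp 1 * M) * x ^ (-2*β) := by
  have ha : (0:ℝ) ≤ -2*β := by linarith
  intro x hx y hy s hs
  obtain ⟨hx0, hx1⟩ := hx
  have hy0 : (0:ℝ) < y := hy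
  obtain ⟨hs0, hs1⟩ := hs
  obtain ⟨hq1, hq2⟩ := stmt12_sqrt_facts hs0 hs1
  have hs0' : (0:ℝ) < s := by linarith
  set N := (1 + s) * x - (1 - s) * y with hN
  have hker : Kker1 (-β) s x y ≤ 2 * 2 ^ |(-(2*(-β)+1))| * (Real.exp 1 * Real.exp (-N^2/8)) := by
    unfold Kker1
    have h1 : s ^ (-(1:ℝ)/2) ≤ 2 := stmt12_srpow_le hs0 hs1
    have h2 : (x + Real.sqrt s) ^ (-(2*(-β)+1)) ≤ 2 ^ |(-(2*(-β)+1))| :=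
      stmt12_lemA _ (by linarith) (by linarith)
    have h3 : Real.exp (x ^ 2 - ((1 + s) * x - (1 - s) * y) ^ 2 / (8 * s)) ≤
        Real.exp 1 * Real.exp (-N^2/8) := by
      rw [← Real.exp_add]
      apply Real.exp_le_exp.2
      have hdd : N^2/8 ≤ N^2/(8*s) :=
        div_le_div_of_nonneg_left (sq_nonneg N) (by positivity) (by linarith)
      have hx2 : x^2 ≤ 1 := by nlinarith
      rw [hN]
      linarith [hdd]
    have hb0 : (0:ℝ) < x + Real.sqrt s := by linarith
    have p1 : (0:ℝ) ≤ s ^ (-(1:ℝ)/2) := Real.rpow_nonneg hs0'.le _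
    have p2 : (0:ℝ) ≤ (x + Real.sqrt s) ^ (-(2*(-β)+1)) := Real.rpow_nonneg hb0.le _
    have p4 : (0:ℝ) ≤ (2:ℝ) ^ |(-(2*(-β)+1))| := Real.rpow_nonneg (by norm_num) _
    gcongr
  have hstep2 : (1-s) ^ (-2*β) * Real.exp (-N^2/8) ≤ M * (y ^ (-2*β))⁻¹ := by
    set u := (1 - s) * y with hu
    have hu0 : (0:ℝ) ≤ u := by
      rw [hu]; exact mul_nonneg (by linarith) hy0.le
    have hc0 : (0:ℝ) ≤ (1 + s) * x := by positivity
    have hc2 : (1 + s) * x ≤ 2 := by nlinarith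
    have hMb := hM u ((1+s)*x) hu0 hc0 hc2
    have hNsq : -N^2/8 = -(u - (1+s)*x)^2/8 := by rw [hN, hu]; ring
    have h1s : (1 - s : ℝ) = u / y := by rw [hu]; field_simp
    have hys : (0:ℝ) < y ^ (-2*β) := Real.rpow_pos_of_pos hy0 _
    rw [hNsq, h1s, Real.div_rpow hu0 hy0.le, div_mul_eq_mul_div, div_le_iff₀ hys,
      mul_assoc, inv_mul_cancel₀ (ne_of_gt hys), mul_one]
    exact hMb
  have hxy : (x*y) ^ (-2*β) = x ^ (-2*β) * y ^ (-2*β) := Real.mul_rpow hx0.le hy0.le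
  have hys : (0:ℝ) < y ^ (-2*β) := Real.rpow_pos_of_pos hy0 _
  have h1s0 : (0:ℝ) ≤ (1-s) ^ (-2*β) := Real.rpow_nonneg (by linarith) _
  have hkey : (1-s) ^ (-2*β) * Kker1 (-β) s x y ≤
      2 * 2 ^ |(-(2*(-β)+1))| * Real.exp 1 * (M * (y ^ (-2*β))⁻¹) := by
    calc (1-s) ^ (-2*β) * Kker1 (-β) s x y
        ≤ (1-s) ^ (-2*β) * (2 * 2 ^ |(-(2*(-β)+1))| * (Real.exp 1 * Real.exp (-N^2/8))) := by
          apply mul_le_mul_of_nonneg_left hker h1s0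
      _ = 2 * 2 ^ |(-(2*(-β)+1))| * Real.exp 1 * ((1-s) ^ (-2*β) * Real.exp (-N^2/8)) := by
          ring
      _ ≤ 2 * 2 ^ |(-(2*(-β)+1))| * Real.exp 1 * (M * (y ^ (-2*β))⁻¹) := by
          apply mul_le_mul_of_nonneg_left hstep2
          positivity
  calc (x*y) ^ (-2*β) * ((1-s) ^ (-2*β) * Kker1 (-β) s x y)
      ≤ (x*y) ^ (-2*β) * (2 * 2 ^ |(-(2*(-β)+1))| * Real.exp 1 * (M * (y ^ (-2*β))⁻¹)) := by
        apply mul_le_mul_of_nonneg_left hkey (Real.rpow_nonneg (by positivity) _)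
    _ = (2 * 2 ^ |(-(2*(-β)+1))| * Real.exp 1 * M) * x ^ (-2*β) *
          (y ^ (-2*β) * (y ^ (-2*β))⁻¹) := by rw [hxy]; ring
    _ = (2 * 2 ^ |(-(2*(-β)+1))| * Real.exp 1 * M) * x ^ (-2*β) := by
        rw [mul_inv_cancel₀ (ne_of_gt hys), mul_one]

lemma stmt12_Jbound (β C : ℝ) (hC : 0 ≤ C) :
    ∫⁻ x in Set.Ioo (0:ℝ) 1, ENNReal.ofReal (C * x ^ (-2*β)) ∂(nu1 β) ≤ ENNReal.ofReal C := by
  rw [nu1, Measure.restrict_restrict measurableSet_Ioo,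
    Set.inter_eq_left.mpr Set.Ioo_subset_Ioi_self,
    restrict_withDensity measurableSet_Ioo,
    lintegral_withDensity_eq_lintegral_mul _ (by fun_prop) (by fun_prop)]
  calc ∫⁻ x in Set.Ioo (0:ℝ) 1,
        ENNReal.ofReal (x ^ (2*β+1) * Real.exp (-x^2)) * ENNReal.ofReal (C * x ^ (-2*β)) ∂volume
      ≤ ∫⁻ _ in Set.Ioo (0:ℝ) 1, ENNReal.ofReal C ∂volume := by
        apply setLIntegral_mono' measurableSet_Ioo
        intro x hx
        obtain ⟨hx0, hx1⟩ := hx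
        rw [← ENNReal.ofReal_mul (by positivity)]
        apply ENNReal.ofReal_le_ofReal
        have h1 : x ^ (2*β+1) * x ^ (-2*β) = x := by
          rw [← Real.rpow_add hx0]
          norm_num
        calc x ^ (2*β+1) * Real.exp (-x^2) * (C * x ^ (-2*β))
            = C * (x ^ (2*β+1) * x ^ (-2*β)) * Real.exp (-x^2) := by ring
          _ = C * x * Real.exp (-x^2) := by rw [h1]
          _ ≤ C * x := by
              have he : Real.exp (-x^2) ≤ 1 := by
                rw [Real.exp_le_one_iff]; nlinarith
              have h0 : (0:ℝ) ≤ C * x := by positivity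
              calc C * x * Real.exp (-x^2) ≤ C * x * 1 :=
                    mul_le_mul_of_nonneg_left he h0
                _ = C * x := mul_one _
          _ ≤ C := by nlinarith
    _ = ENNReal.ofReal C := by
        rw [setLIntegral_const, Real.volume_Ioo]
        norm_num

lemma stmt12_measbound (γ : ℝ) (hγ : -1 < γ) :
    ∃ D : ℝ, 0 < D ∧ nu1 γ (Set.Ioo 0 1) ≤ ENNReal.ofReal D := by
  have hfin : nu1 γ (Set.Ioo 0 1) < ⊤ := by
    rw [nu1, Measure.restrict_apply measurableSet_Ioo,
      Set.inter_eq_left.mpr Set.Ioo_subset_Ioi_self,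
      withDensity_apply _ measurableSet_Ioo]
    have hint : IntegrableOn (fun x : ℝ => x ^ (2*γ+1)) (Set.Ioo 0 1) volume :=
      (intervalIntegral.integrableOn_Ioo_rpow_iff zero_lt_one).mpr (by linarith)
    calc ∫⁻ x in Set.Ioo (0:ℝ) 1, ENNReal.ofReal (x ^ (2*γ+1) * Real.exp (-x^2)) ∂volume
        ≤ ∫⁻ x in Set.Ioo (0:ℝ) 1, ENNReal.ofReal (x ^ (2*γ+1)) ∂volume := by
          apply setLIntegral_mono' measurableSet_Ioo
          intro x hx
          apply ENNReal.ofReal_le_ofReal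
          have h0 : (0:ℝ) ≤ x ^ (2*γ+1) := Real.rpow_nonneg hx.1.le _
          nlinarith [Real.exp_le_one_iff.mpr (by nlinarith : -x^2 ≤ 0), Real.exp_pos (-x^2)]
      _ < ⊤ := hint.lintegral_lt_top
  refine ⟨(nu1 γ (Set.Ioo 0 1)).toReal + 1, by positivity, ?_⟩
  rw [ENNReal.ofReal_add ENNReal.toReal_nonneg zero_le_one,
    ENNReal.ofReal_toReal hfin.ne]
  exact le_add_of_nonneg_right (by norm_num)

/-- For `β ≤ −1` and `γ > −1`, the operators
`N₂^β f(x) = χ_{(0,1)}(x) ∫₀^∞ [(xy)^{−2β} sup_{1/4<s<1} (1−s)^{−2β} K_s^{−β}(x,y)] f(y) dν_β(y)`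
and `N₃^γ f(x) = χ_{(0,1)}(x) ∫₀^∞ [sup_{1/4<s<1} K_s^γ(x,y)] f(y) dν_γ(y)`
are of strong type `(1,1)` with respect to `ν_β`, resp. `ν_γ`. -/
theorem stmt12 (β γ : ℝ) (hβ : β ≤ -1) (hγ : -1 < γ) :
    (∃ C : ℝ, 0 < C ∧ ∀ f : ℝ → ℝ, (∀ y, 0 ≤ f y) → Integrable f (nu1 β) →
      (∫⁻ x, Set.indicator (Set.Ioo (0 : ℝ) 1)
          (fun x => ∫⁻ y,
            ENNReal.ofReal ((x * y) ^ (-2 * β)) *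
              (⨆ s ∈ Set.Ioo (1 / 4 : ℝ) 1,
                ENNReal.ofReal ((1 - s) ^ (-2 * β) * Kker1 (-β) s x y)) *
              ENNReal.ofReal (f y) ∂(nu1 β)) x ∂(nu1 β)) ≤
        ENNReal.ofReal (C * ∫ y, f y ∂(nu1 β))) ∧
    (∃ C : ℝ, 0 < C ∧ ∀ f : ℝ → ℝ, (∀ y, 0 ≤ f y) → Integrable f (nu1 γ) →
      (∫⁻ x, Set.indicator (Set.Ioo (0 : ℝ) 1)
          (fun x => ∫⁻ y,
            (⨆ s ∈ Set.Ioo (1 / 4 : ℝ) 1, ENNReal.ofReal (Kker1 γ s x y)) *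
              ENNReal.ofReal (f y) ∂(nu1 γ)) x ∂(nu1 γ)) ≤
        ENNReal.ofReal (C * ∫ y, f y ∂(nu1 γ))) := by
  constructor
  · -- N₂
    obtain ⟨M, hM0, hM⟩ := stmt12_lemB (-2*β) (by linarith)
    set C₂ := 2 * 2 ^ |(-(2*(-β)+1))| * Real.exp 1 * M with hC₂def
    have hC₂ : 0 < C₂ := by
      rw [hC₂def]
      have : (0:ℝ) < 2 ^ |(-(2*(-β)+1))| := Real.rpow_pos_of_pos (by norm_num) _
      positivity
    refine ⟨C₂, hC₂, fun f hf hfi => ?_⟩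
    have hI : ∫⁻ y, ENNReal.ofReal (f y) ∂(nu1 β) = ENNReal.ofReal (∫ y, f y ∂(nu1 β)) :=
      (ofReal_integral_eq_lintegral_ofReal hfi (Filter.Eventually.of_forall hf)).symm
    have hae : ∀ᵐ y ∂(nu1 β), y ∈ Set.Ioi (0:ℝ) := by
      rw [nu1]; exact ae_restrict_mem measurableSet_Ioi
    have hinner : ∀ x ∈ Set.Ioo (0:ℝ) 1,
        (∫⁻ y, ENNReal.ofReal ((x * y) ^ (-2 * β)) *
            (⨆ s ∈ Set.Ioo (1/4:ℝ) 1,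
              ENNReal.ofReal ((1 - s) ^ (-2 * β) * Kker1 (-β) s x y)) *
            ENNReal.ofReal (f y) ∂(nu1 β))
          ≤ ENNReal.ofReal (C₂ * x ^ (-2*β)) * ∫⁻ y, ENNReal.ofReal (f y) ∂(nu1 β) := by
      intro x hx
      rw [← lintegral_const_mul' _ _ ENNReal.ofReal_ne_top]
      apply lintegral_mono_ae
      filter_upwards [hae] with y hy
      apply mul_le_mul_left
      have hxy0 : (0:ℝ) ≤ (x * y) ^ (-2*β) :=
        Real.rpow_nonneg (mul_nonneg hx.1.le (le_of_lt hy)) _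
      simp only [ENNReal.mul_iSup]
      apply iSup₂_le
      intro s hs
      rw [← ENNReal.ofReal_mul hxy0]
      exact ENNReal.ofReal_le_ofReal (stmt12_lemK2 β M hβ hM x hx y hy s hs)
    calc (∫⁻ x, Set.indicator (Set.Ioo (0 : ℝ) 1)
          (fun x => ∫⁻ y,
            ENNReal.ofReal ((x * y) ^ (-2 * β)) *
              (⨆ s ∈ Set.Ioo (1 / 4 : ℝ) 1,
                ENNReal.ofReal ((1 - s) ^ (-2 * β) * Kker1 (-β) s x y)) *
              ENNReal.ofReal (f y) ∂(nu1 β)) x ∂(nu1 β))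
        = ∫⁻ x in Set.Ioo (0:ℝ) 1, (∫⁻ y,
            ENNReal.ofReal ((x * y) ^ (-2 * β)) *
              (⨆ s ∈ Set.Ioo (1 / 4 : ℝ) 1,
                ENNReal.ofReal ((1 - s) ^ (-2 * β) * Kker1 (-β) s x y)) *
              ENNReal.ofReal (f y) ∂(nu1 β)) ∂(nu1 β) :=
          lintegral_indicator measurableSet_Ioo _
      _ ≤ ∫⁻ x in Set.Ioo (0:ℝ) 1,
            ENNReal.ofReal (C₂ * x ^ (-2*β)) * (∫⁻ y, ENNReal.ofReal (f y) ∂(nu1 β)) ∂(nu1 β) :=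
          setLIntegral_mono' measurableSet_Ioo hinner
      _ = (∫⁻ x in Set.Ioo (0:ℝ) 1, ENNReal.ofReal (C₂ * x ^ (-2*β)) ∂(nu1 β)) *
            (∫⁻ y, ENNReal.ofReal (f y) ∂(nu1 β)) :=
          lintegral_mul_const' _ _ (by rw [hI]; exact ENNReal.ofReal_ne_top)
      _ ≤ ENNReal.ofReal C₂ * (∫⁻ y, ENNReal.ofReal (f y) ∂(nu1 β)) :=
          mul_le_mul_left (stmt12_Jbound β C₂ hC₂.le) _
      _ = ENNReal.ofReal C₂ * ENNReal.ofReal (∫ y, f y ∂(nu1 β)) := by rw [hI]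
      _ = ENNReal.ofReal (C₂ * ∫ y, f y ∂(nu1 β)) := (ENNReal.ofReal_mul hC₂.le).symm
  · -- N₃
    obtain ⟨D, hD0, hD⟩ := stmt12_measbound γ hγ
    set C₃ := 2 * 2 ^ |(-(2*γ+1))| * Real.exp 1 with hC₃def
    have hC₃ : 0 < C₃ := by
      rw [hC₃def]
      have : (0:ℝ) < 2 ^ |(-(2*γ+1))| := Real.rpow_pos_of_pos (by norm_num) _
      positivity
    refine ⟨C₃ * D, by positivity, fun f hf hfi => ?_⟩
    have hI : ∫⁻ y, ENNReal.ofReal (f y) ∂(nu1 γ) = ENNReal.ofReal (∫ y, f y ∂(nu1 γ)) :=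
      (ofReal_integral_eq_lintegral_ofReal hfi (Filter.Eventually.of_forall hf)).symm
    have hfnn : (0:ℝ) ≤ ∫ y, f y ∂(nu1 γ) := integral_nonneg hf
    have hinner : ∀ x ∈ Set.Ioo (0:ℝ) 1,
        (∫⁻ y, (⨆ s ∈ Set.Ioo (1/4:ℝ) 1, ENNReal.ofReal (Kker1 γ s x y)) *
            ENNReal.ofReal (f y) ∂(nu1 γ))
          ≤ ENNReal.ofReal C₃ * ∫⁻ y, ENNReal.ofReal (f y) ∂(nu1 γ) := by
      intro x hx
      rw [← lintegral_const_mul' _ _ ENNReal.ofReal_ne_top]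
      apply lintegral_mono
      intro y
      apply mul_le_mul_left
      apply iSup₂_le
      intro s hs
      exact ENNReal.ofReal_le_ofReal (stmt12_lemK3 γ x hx y s hs)
    calc (∫⁻ x, Set.indicator (Set.Ioo (0 : ℝ) 1)
          (fun x => ∫⁻ y,
            (⨆ s ∈ Set.Ioo (1 / 4 : ℝ) 1, ENNReal.ofReal (Kker1 γ s x y)) *
              ENNReal.ofReal (f y) ∂(nu1 γ)) x ∂(nu1 γ))
        = ∫⁻ x in Set.Ioo (0:ℝ) 1, (∫⁻ y,
            (⨆ s ∈ Set.Ioo (1 / 4 : ℝ) 1, ENNReal.ofReal (Kker1 γ s x y)) *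
              ENNReal.ofReal (f y) ∂(nu1 γ)) ∂(nu1 γ) :=
          lintegral_indicator measurableSet_Ioo _
      _ ≤ ∫⁻ _ in Set.Ioo (0:ℝ) 1,
            ENNReal.ofReal C₃ * (∫⁻ y, ENNReal.ofReal (f y) ∂(nu1 γ)) ∂(nu1 γ) :=
          setLIntegral_mono' measurableSet_Ioo hinner
      _ = (ENNReal.ofReal C₃ * (∫⁻ y, ENNReal.ofReal (f y) ∂(nu1 γ))) * nu1 γ (Set.Ioo 0 1) :=
          setLIntegral_const _ _
      _ ≤ (ENNReal.ofReal C₃ * ENNReal.ofReal (∫ y, f y ∂(nu1 γ))) * ENNReal.ofReal D := by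
          rw [hI]; exact mul_le_mul_right hD _
      _ = ENNReal.ofReal (C₃ * (∫ y, f y ∂(nu1 γ)) * D) := by
          rw [← ENNReal.ofReal_mul hC₃.le, ← ENNReal.ofReal_mul (by positivity)]
      _ = ENNReal.ofReal (C₃ * D * ∫ y, f y ∂(nu1 γ)) := by
          congr 1; ring
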